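/- Let x_i, y_i, w_i, z_i (i = 1, …, n) be nonnegative real numbers such that for every i: x_i ≥ w_i ≥ y_i, x_i ≥ z_i ≥ y_i, and x_i + y_i ≥ w_i + z_i. Then ∏_{i=1}^{n} x_i + ∏_{i=1}^{n} y_i ≥ ∏_{i=1}^{n} w_i + ∏_{i=1}^{n} z_i. -/
import Mathlib


/-- **Corollary 2.3.** For nonnegative reals `x_i, y_i, w_i, z_i` with
`x_i ≥ w_i ≥ y_i`, `x_i ≥ z_i ≥ y_i` and `x_i + y_i ≥ w_i + z_i` for all `i`,
`∏ x_i + ∏ y_i ≥ ∏ w_i + ∏ z_i`. -/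
theorem prod_add_prod_ge {n : ℕ} (x y w z : Fin n → ℝ)
    (hx : ∀ i, 0 ≤ x i) (hy : ∀ i, 0 ≤ y i) (hw : ∀ i, 0 ≤ w i) (hz : ∀ i, 0 ≤ z i)
    (hxw : ∀ i, w i ≤ x i) (hwy : ∀ i, y i ≤ w i)
    (hxz : ∀ i, z i ≤ x i) (hzy : ∀ i, y i ≤ z i)
    (hsum : ∀ i, w i + z i ≤ x i + y i) :
    (∏ i, x i) + (∏ i, y i) ≥ (∏ i, w i) + (∏ i, z i) := by
  induction n with
  | zero => simp
  | succ n ih =>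
    have key := ih (x ∘ Fin.succ) (y ∘ Fin.succ) (w ∘ Fin.succ) (z ∘ Fin.succ)
      (fun i => hx _) (fun i => hy _) (fun i => hw _) (fun i => hz _)
      (fun i => hxw _) (fun i => hwy _) (fun i => hxz _) (fun i => hzy _)
      (fun i => hsum _)
    simp only [Fin.prod_univ_succ, Function.comp] at key ⊢
    set X := ∏ i : Fin n, x (Fin.succ i) with hX
    set Y := ∏ i : Fin n, y (Fin.succ i) with hY
    set W := ∏ i : Fin n, w (Fin.succ i) with hW
    set Z := ∏ i : Fin n, z (Fin.succ i) with hZ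
    have hXp : 0 ≤ X := Finset.prod_nonneg fun i _ => hx _
    have hYp : 0 ≤ Y := Finset.prod_nonneg fun i _ => hy _
    have hWp : 0 ≤ W := Finset.prod_nonneg fun i _ => hw _
    have hZp : 0 ≤ Z := Finset.prod_nonneg fun i _ => hz _
    have hYW : Y ≤ W := Finset.prod_le_prod (fun i _ => hy _) (fun i _ => hwy _)
    have hWX : W ≤ X := Finset.prod_le_prod (fun i _ => hw _) (fun i _ => hxw _)
    have hYZ : Y ≤ Z := Finset.prod_le_prod (fun i _ => hy _) (fun i _ => hzy _)
    have hZX : Z ≤ X := Finset.prod_le_prod (fun i _ => hz _) (fun i _ => hxz _)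
    have a0 := hx 0; have b0 := hy 0; have hc := hw 0; have hd := hz 0
    have h1 := hxw 0; have h2 := hwy 0; have h3 := hxz 0; have h4 := hzy 0
    have h5 := hsum 0
    rcases le_total Z W with hcase | hcase
    · nlinarith [mul_nonneg hZp (by linarith : (0:ℝ) ≤ x 0 + y 0 - w 0 - z 0),
        mul_nonneg (by linarith : (0:ℝ) ≤ W - Z) (by linarith : (0:ℝ) ≤ x 0 - w 0),
        mul_nonneg a0 (by linarith : (0:ℝ) ≤ X + Y - W - Z),
        mul_nonneg (by linarith : (0:ℝ) ≤ x 0 - y 0) (by linarith : (0:ℝ) ≤ Z - Y)]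
    · nlinarith [mul_nonneg hWp (by linarith : (0:ℝ) ≤ x 0 + y 0 - w 0 - z 0),
        mul_nonneg (by linarith : (0:ℝ) ≤ Z - W) (by linarith : (0:ℝ) ≤ x 0 - z 0),
        mul_nonneg a0 (by linarith : (0:ℝ) ≤ X + Y - W - Z),
        mul_nonneg (by linarith : (0:ℝ) ≤ x 0 - y 0) (by linarith : (0:ℝ) ≤ W - Y)]
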